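/- arXiv:1407.0912 — 2 statements merged into one kernel-verified Lean document; each statement's English description precedes it below -/
import Mathlib

section
/- (L^∞ isometry of the unfolding operator, Prop. 3.3(iv), p = ∞.) Let ε > 0 and fix a partition of (0,1) for the parameter ε. Then for every φ ∈ L^∞(R^ε) one has ‖T_ε(φ)‖_{L^∞((0,1)×Y*)} = ‖φ‖_{L^∞(R^ε)}, where both norms are essential suprema with respect to Lebesgue measure. -/
open MeasureTheory Set Filter Topology

noncomputable section

/-- The thin domain `R^ε = {(x,y) : x ∈ (0,1), 0 < y < ε G(x, x/ε)}`. -/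
def thinDomain (G : ℝ → ℝ → ℝ) (ε : ℝ) : Set (ℝ × ℝ) :=
  {z : ℝ × ℝ | z.1 ∈ Ioo (0 : ℝ) 1 ∧ z.2 ∈ Ioo (0 : ℝ) (ε * G z.1 (z.1 / ε))}

/-- The reference cell `Y* = (0,l₁) × (0,G₁)`. -/
def Ystar (l1 G1 : ℝ) : Set (ℝ × ℝ) := Ioo (0 : ℝ) l1 ×ˢ Ioo (0 : ℝ) G1

/-- A partition `0 = x₀ < x₁ < ⋯ < x_{N+1} = 1` of the interval `(0,1)` (for a parameter `ε`). -/
structure EpsPartition where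
  N : ℕ
  pts : ℕ → ℝ
  pts_zero : pts 0 = 0
  pts_last : pts (N + 1) = 1
  pts_lt : ∀ k ≤ N, pts k < pts (k + 1)

/-- The index `k` such that `x ∈ [x_k, x_{k+1})` (for `x ∈ [0,1)`). -/
def EpsPartition.idx (P : EpsPartition) (x : ℝ) : ℕ :=
  Nat.findGreatest (fun k => P.pts k ≤ x) P.N

/-- `[x]_ε`, the partition point just below `x`. -/
def EpsPartition.bracket (P : EpsPartition) (x : ℝ) : ℝ := P.pts (P.idx x)

/-- `Γ_{[x]_ε} = (x_{k+1} - x_k) / l(x_k)` for `x ∈ [x_k, x_{k+1})`. -/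
def EpsPartition.Gamma (P : EpsPartition) (l : ℝ → ℝ) (x : ℝ) : ℝ :=
  (P.pts (P.idx x + 1) - P.pts (P.idx x)) / l (P.pts (P.idx x))

/-- The unfolding operator `T_ε` associated to a partition, acting on a function `φ` on `R^ε`
(extended by zero to all of `ℝ²` via the indicator of `R^ε`). -/
def unfoldOp (G : ℝ → ℝ → ℝ) (l : ℝ → ℝ) (ε : ℝ) (P : EpsPartition)
    (φ : ℝ × ℝ → ℝ) : ℝ × ℝ × ℝ → ℝ := fun q =>
  if q.2.1 < l (P.bracket q.1) then
    (thinDomain G ε).indicator φ (P.bracket q.1 + P.Gamma l q.1 * q.2.1, ε * q.2.2)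
  else 0

/-- The averaging operator `U_ε`, the formal adjoint of `T_ε`. -/
def avgOp (l : ℝ → ℝ) (ε : ℝ) (P : EpsPartition) (ψ : ℝ × ℝ × ℝ → ℝ) : ℝ × ℝ → ℝ := fun z =>
  (1 / l (P.bracket z.1)) *
    ∫ y₁ in Ioo (0 : ℝ) (l (P.bracket z.1)),
      ψ (P.bracket z.1 + P.Gamma l z.1 * y₁, (z.1 - P.bracket z.1) / P.Gamma l z.1, z.2 / ε)

/-- The limit set `W = {(x,y₁,y₂) : x ∈ (0,1), 0 < y₁ < l(x), 0 < y₂ < G(x,y₁)}`. -/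
def Wset (G : ℝ → ℝ → ℝ) (l : ℝ → ℝ) : Set (ℝ × ℝ × ℝ) :=
  {q | q.1 ∈ Ioo (0 : ℝ) 1 ∧ q.2.1 ∈ Ioo (0 : ℝ) (l q.1) ∧ q.2.2 ∈ Ioo (0 : ℝ) (G q.1 q.2.1)}

/-- The set `W₀ = {(x,y₁) : x ∈ (0,1), 0 < y₁ < l(x)}`. -/
def W0set (l : ℝ → ℝ) : Set (ℝ × ℝ) :=
  {z : ℝ × ℝ | z.1 ∈ Ioo (0 : ℝ) 1 ∧ z.2 ∈ Ioo (0 : ℝ) (l z.1)}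

open scoped ENNReal NNReal

namespace EpsPartition

lemma pts_mono (P : EpsPartition) : ∀ {i j : ℕ}, i ≤ j → j ≤ P.N + 1 → P.pts i ≤ P.pts j := by
  intro i j hij hj
  induction j with
  | zero =>
    obtain rfl := Nat.le_zero.mp hij
    exact le_rfl
  | succ n ih =>
    rcases Nat.eq_or_lt_of_le hij with rfl | h
    · exact le_rfl
    · exact le_trans (ih (Nat.lt_succ_iff.mp h) (by omega))
        (le_of_lt (P.pts_lt n (by omega)))

lemma pts_nonneg (P : EpsPartition) {k : ℕ} (hk : k ≤ P.N + 1) : 0 ≤ P.pts k :=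
  P.pts_zero ▸ P.pts_mono (Nat.zero_le k) hk

lemma pts_le_one (P : EpsPartition) {k : ℕ} (hk : k ≤ P.N + 1) : P.pts k ≤ 1 :=
  P.pts_last ▸ P.pts_mono hk le_rfl

lemma idx_le (P : EpsPartition) (x : ℝ) : P.idx x ≤ P.N :=
  Nat.findGreatest_le _

lemma bracket_le (P : EpsPartition) {x : ℝ} (hx : 0 ≤ x) : P.bracket x ≤ x :=
  Nat.findGreatest_spec (P := fun k => P.pts k ≤ x) (Nat.zero_le P.N)
    (show P.pts 0 ≤ x by rw [P.pts_zero]; exact hx)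

lemma lt_next (P : EpsPartition) {x : ℝ} (hx : x < 1) : x < P.pts (P.idx x + 1) := by
  rcases Nat.lt_or_ge (P.idx x) P.N with h | h
  · by_contra hle
    push_neg at hle
    exact Nat.findGreatest_is_greatest (P := fun k => P.pts k ≤ x)
      (Nat.lt_succ_self _) (Nat.succ_le_of_lt h) hle
  · have h2 : P.idx x = P.N := le_antisymm (P.idx_le x) h
    rw [h2, P.pts_last]
    exact hx

lemma idx_eq (P : EpsPartition) {k : ℕ} {x : ℝ} (hk : k ≤ P.N) (h1 : P.pts k ≤ x)
    (h2 : x < P.pts (k + 1)) : P.idx x = k := by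
  refine le_antisymm ?_ (Nat.le_findGreatest hk h1)
  by_contra hlt
  push_neg at hlt
  have hspec : P.pts (P.idx x) ≤ x :=
    Nat.findGreatest_spec (P := fun k => P.pts k ≤ x) hk h1
  have hmono : P.pts (k + 1) ≤ P.pts (P.idx x) :=
    P.pts_mono hlt (by have := P.idx_le x; omega)
  linarith

end EpsPartition

lemma affine_qmp (a b c : ℝ) (hb : b ≠ 0) (hc : c ≠ 0) :
    Measure.QuasiMeasurePreserving (fun w : ℝ × ℝ => (a + b * w.1, c * w.2))
      volume volume := by
  have hf₁ : Measurable (fun y : ℝ => a + b * y) := by fun_prop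
  have hf₂ : Measurable (fun y : ℝ => c * y) := by fun_prop
  have h1 : Measure.map (fun y : ℝ => a + b * y) volume ≪ (volume : Measure ℝ) := by
    refine Measure.AbsolutelyContinuous.mk fun s hs h0 => ?_
    rw [Measure.map_apply hf₁ hs]
    have hpre : (fun y : ℝ => a + b * y) ⁻¹' s = (b * ·) ⁻¹' ((a + ·) ⁻¹' s) := rfl
    rw [hpre, Real.volume_preimage_mul_left hb]
    have : (volume : Measure ℝ) ((fun h => a + h) ⁻¹' s) = volume s :=
      measure_preimage_add volume a s
    rw [this, h0, mul_zero]
  have h2 : Measure.map (fun y : ℝ => c * y) volume ≪ (volume : Measure ℝ) := by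
    refine Measure.AbsolutelyContinuous.mk fun s hs h0 => ?_
    rw [Measure.map_apply hf₂ hs, Real.volume_preimage_mul_left hc, h0, mul_zero]
  refine ⟨by fun_prop, ?_⟩
  have heq : (fun w : ℝ × ℝ => (a + b * w.1, c * w.2))
      = Prod.map (fun y : ℝ => a + b * y) (fun y : ℝ => c * y) := rfl
  rw [heq, MeasureTheory.Measure.volume_eq_prod, ← Measure.map_prod_map _ _ hf₁ hf₂]
  exact Measure.AbsolutelyContinuous.prod h1 h2

lemma affine_preimage_null (a b c : ℝ) (hb : b ≠ 0) (hc : c ≠ 0) {S : Set (ℝ × ℝ)}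
    (hS : volume S = 0) :
    volume ((fun w : ℝ × ℝ => (a + b * w.1, c * w.2)) ⁻¹' S) = 0 :=
  (affine_qmp a b c hb hc).preimage_null hS

lemma affine_image_null (a b c : ℝ) (hb : b ≠ 0) (hc : c ≠ 0) {S : Set (ℝ × ℝ)}
    (hS : volume S = 0) :
    volume ((fun w : ℝ × ℝ => (a + b * w.1, c * w.2)) '' S) = 0 := by
  refine measure_mono_null ?_
    (affine_preimage_null (-a / b) b⁻¹ c⁻¹ (inv_ne_zero hb) (inv_ne_zero hc) hS)
  rintro _ ⟨w, hw, rfl⟩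
  have hkey : (-a / b + b⁻¹ * (a + b * w.1), c⁻¹ * (c * w.2)) = w := by
    have h1 : -a / b + b⁻¹ * (a + b * w.1) = w.1 := by field_simp; ring
    have h2 : c⁻¹ * (c * w.2) = w.2 := by field_simp
    rw [Prod.ext_iff]
    exact ⟨h1, h2⟩
  show (-a / b + b⁻¹ * (a + b * w.1), c⁻¹ * (c * w.2)) ∈ S
  rw [hkey]
  exact hw

def cellMap (P : EpsPartition) (l : ℝ → ℝ) (ε : ℝ) (k : ℕ) : ℝ × ℝ → ℝ × ℝ :=
  fun w => (P.pts k + (P.pts (k + 1) - P.pts k) / l (P.pts k) * w.1, ε * w.2)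

def cellFun (G : ℝ → ℝ → ℝ) (l : ℝ → ℝ) (ε : ℝ) (P : EpsPartition) (φ : ℝ × ℝ → ℝ) (k : ℕ) :
    ℝ × ℝ → ℝ :=
  fun w => if w.1 < l (P.pts k) then (thinDomain G ε).indicator φ (cellMap P l ε k w) else 0

lemma unfoldOp_eq_cellFun (G : ℝ → ℝ → ℝ) (l : ℝ → ℝ) (ε : ℝ) (P : EpsPartition)
    (φ : ℝ × ℝ → ℝ) {x : ℝ} {k : ℕ} (hk : P.idx x = k) (w : ℝ × ℝ) :
    unfoldOp G l ε P φ (x, w) = cellFun G l ε P φ k w := by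
  subst hk; rfl

/-- `L^∞` isometry of the unfolding operator (Prop. 3.3(iv), `p = ∞`). -/
theorem unfolding_Linfty_isometry
    (l0 l1 G0 G1 : ℝ) (hl0 : 0 < l0) (hl01 : l0 < l1) (hG0 : 0 < G0) (hG01 : G0 ≤ G1)
    (l : ℝ → ℝ) (hlC1 : ContDiffOn ℝ 1 l (Ioo 0 1))
    (hlb : ∀ x ∈ Icc (0 : ℝ) 1, l0 ≤ l x ∧ l x < l1)
    (G : ℝ → ℝ → ℝ)
    (hGcont : ContinuousOn (fun z : ℝ × ℝ => G z.1 z.2) (Ioo 0 1 ×ˢ (univ : Set ℝ)))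
    (hGb : ∀ x ∈ Ioo (0 : ℝ) 1, ∀ y : ℝ, G0 ≤ G x y ∧ G x y ≤ G1)
    (hGper : ∀ x ∈ Ioo (0 : ℝ) 1, ∀ y : ℝ, G x (y + l x) = G x y)
    (ε : ℝ) (hε : 0 < ε) (P : EpsPartition)
    (φ : ℝ × ℝ → ℝ)
    (hφ : MemLp φ ⊤ (volume.restrict (thinDomain G ε))) :
    eLpNorm (unfoldOp G l ε P φ) ⊤ (volume.restrict (Ioo (0 : ℝ) 1 ×ˢ Ystar l1 G1))
      = eLpNorm φ ⊤ (volume.restrict (thinDomain G ε)) := by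
  have hε' : ε ≠ 0 := ne_of_gt hε
  have hlpos : ∀ k, k ≤ P.N → 0 < l (P.pts k) := fun k hk =>
    lt_of_lt_of_le hl0 (hlb _ ⟨P.pts_nonneg (by omega), P.pts_le_one (by omega)⟩).1
  have hΓpos : ∀ k, k ≤ P.N → 0 < (P.pts (k + 1) - P.pts k) / l (P.pts k) := fun k hk =>
    div_pos (sub_pos.mpr (P.pts_lt k hk)) (hlpos k hk)
  -- measurability of the two sets
  have hrect : MeasurableSet (Ioo (0 : ℝ) 1 ×ˢ Ystar l1 G1) :=
    measurableSet_Ioo.prod (measurableSet_Ioo.prod measurableSet_Ioo)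
  have hTDopen : IsOpen (thinDomain G ε) := by
    have hcont : ContinuousOn (fun z : ℝ × ℝ => ε * G z.1 (z.1 / ε) - z.2)
        (Ioo (0 : ℝ) 1 ×ˢ (univ : Set ℝ)) := by
      refine ContinuousOn.sub ?_ continuous_snd.continuousOn
      refine ContinuousOn.mul continuousOn_const ?_
      have hin : Continuous (fun z : ℝ × ℝ => (z.1, z.1 / ε)) := by fun_prop
      exact hGcont.comp hin.continuousOn (fun z hz => ⟨hz.1, trivial⟩)
    have hopen1 : IsOpen ((Ioo (0 : ℝ) 1 ×ˢ (univ : Set ℝ)) ∩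
        (fun z : ℝ × ℝ => ε * G z.1 (z.1 / ε) - z.2) ⁻¹' Ioi 0) :=
      hcont.isOpen_inter_preimage (isOpen_Ioo.prod isOpen_univ) isOpen_Ioi
    have heq : thinDomain G ε = ((Ioo (0 : ℝ) 1 ×ˢ (univ : Set ℝ)) ∩
        (fun z : ℝ × ℝ => ε * G z.1 (z.1 / ε) - z.2) ⁻¹' Ioi 0) ∩ {z : ℝ × ℝ | 0 < z.2} := by
      ext z
      simp only [thinDomain, mem_setOf_eq, mem_Ioo, mem_inter_iff, mem_prod, mem_univ,
        and_true, mem_preimage, mem_Ioi, sub_pos]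
      tauto
    rw [heq]
    exact hopen1.inter (isOpen_lt continuous_const continuous_snd)
  have hTD : MeasurableSet (thinDomain G ε) := hTDopen.measurableSet
  rw [eLpNorm_exponent_top, eLpNorm_exponent_top]
  set C := eLpNormEssSup φ (volume.restrict (thinDomain G ε)) with hC
  set D := eLpNormEssSup (unfoldOp G l ε P φ)
    (volume.restrict (Ioo (0 : ℝ) 1 ×ˢ Ystar l1 G1)) with hD
  apply le_antisymm
  · -- D ≤ C
    have hFnull : volume ({z : ℝ × ℝ | C < (‖φ z‖₊ : ℝ≥0∞)} ∩ thinDomain G ε) = 0 := by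
      have h := meas_eLpNormEssSup_lt (f := φ) (μ := volume.restrict (thinDomain G ε))
      rw [← hC] at h
      rwa [Measure.restrict_apply' hTD] at h
    have hsub : {q : ℝ × ℝ × ℝ | C < (‖unfoldOp G l ε P φ q‖₊ : ℝ≥0∞)} ∩
        (Ioo (0 : ℝ) 1 ×ˢ Ystar l1 G1) ⊆
        ⋃ k ∈ Iio (P.N + 1), (univ : Set ℝ) ×ˢ
          (cellMap P l ε k ⁻¹' ({z : ℝ × ℝ | C < (‖φ z‖₊ : ℝ≥0∞)} ∩ thinDomain G ε)) := by
      rintro ⟨x, w⟩ ⟨hq, -⟩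
      rw [mem_setOf_eq, unfoldOp_eq_cellFun G l ε P φ rfl w] at hq
      by_cases hcond : w.1 < l (P.pts (P.idx x))
      · rw [cellFun, if_pos hcond] at hq
        have hz : cellMap P l ε (P.idx x) w ∈ thinDomain G ε := by
          by_contra hzc
          rw [indicator_of_notMem hzc] at hq
          simp at hq
        rw [indicator_of_mem hz] at hq
        exact mem_biUnion (mem_Iio.mpr (Nat.lt_succ_of_le (P.idx_le x)))
          ⟨mem_univ x, hq, hz⟩
      · rw [cellFun, if_neg hcond] at hq
        simp at hq
    have hUnull : volume (⋃ k ∈ Iio (P.N + 1), (univ : Set ℝ) ×ˢ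
        (cellMap P l ε k ⁻¹' ({z : ℝ × ℝ | C < (‖φ z‖₊ : ℝ≥0∞)} ∩ thinDomain G ε))) = 0 := by
      refine (measure_biUnion_null_iff (Set.to_countable _)).mpr fun k hk => ?_
      have hknull : volume (cellMap P l ε k ⁻¹'
          ({z : ℝ × ℝ | C < (‖φ z‖₊ : ℝ≥0∞)} ∩ thinDomain G ε)) = 0 :=
        affine_preimage_null (P.pts k) ((P.pts (k + 1) - P.pts k) / l (P.pts k)) ε
          (ne_of_gt (hΓpos k (by simp at hk; omega))) hε' hFnull
      rw [MeasureTheory.Measure.volume_eq_prod, Measure.prod_prod, hknull, mul_zero]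
    have hae : ∀ᵐ q ∂(volume.restrict (Ioo (0 : ℝ) 1 ×ˢ Ystar l1 G1)),
        (‖unfoldOp G l ε P φ q‖₊ : ℝ≥0∞) ≤ C := by
      rw [ae_iff, Measure.restrict_apply' hrect]
      refine measure_mono_null ?_ hUnull
      exact fun q hq => hsub ⟨not_le.mp hq.1, hq.2⟩
    exact essSup_le_of_ae_le _ hae
  · -- C ≤ D
    have hEnull : volume ({q : ℝ × ℝ × ℝ | D < (‖unfoldOp G l ε P φ q‖₊ : ℝ≥0∞)} ∩
        (Ioo (0 : ℝ) 1 ×ˢ Ystar l1 G1)) = 0 := by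
      have h := meas_eLpNormEssSup_lt (f := unfoldOp G l ε P φ)
        (μ := volume.restrict (Ioo (0 : ℝ) 1 ×ˢ Ystar l1 G1))
      rw [← hD] at h
      rwa [Measure.restrict_apply' hrect] at h
    set S : ℕ → Set (ℝ × ℝ) := fun k =>
      {w : ℝ × ℝ | w ∈ Ystar l1 G1 ∧ D < (‖cellFun G l ε P φ k w‖₊ : ℝ≥0∞)} with hSdef
    have hSnull : ∀ k, k ≤ P.N → volume (S k) = 0 := by
      intro k hk
      have hsub2 : Ioo (P.pts k) (P.pts (k + 1)) ×ˢ S k ⊆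
          {q : ℝ × ℝ × ℝ | D < (‖unfoldOp G l ε P φ q‖₊ : ℝ≥0∞)} ∩
          (Ioo (0 : ℝ) 1 ×ˢ Ystar l1 G1) := by
        rintro ⟨x, w⟩ ⟨hx, hwS⟩
        simp only [hSdef, mem_setOf_eq] at hwS
        have hidx : P.idx x = k := P.idx_eq hk hx.1.le hx.2
        refine ⟨?_, ?_, hwS.1⟩
        · show D < (‖unfoldOp G l ε P φ (x, w)‖₊ : ℝ≥0∞)
          rw [unfoldOp_eq_cellFun G l ε P φ hidx w]
          exact hwS.2
        · exact ⟨lt_of_le_of_lt (P.pts_nonneg (by omega)) hx.1,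
            lt_of_lt_of_le hx.2 (P.pts_le_one (by omega))⟩
      have h0 : volume (Ioo (P.pts k) (P.pts (k + 1))) * volume (S k) = 0 := by
        rw [← Measure.prod_prod, ← MeasureTheory.Measure.volume_eq_prod]
        exact measure_mono_null hsub2 hEnull
      rcases mul_eq_zero.mp h0 with h | h
      · exfalso
        rw [Real.volume_Ioo] at h
        exact (ENNReal.ofReal_pos.mpr (sub_pos.mpr (P.pts_lt k hk))).ne' h
      · exact h
    have hsub3 : {z : ℝ × ℝ | D < (‖φ z‖₊ : ℝ≥0∞)} ∩ thinDomain G ε ⊆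
        (⋃ k ∈ Iio (P.N + 2), ({P.pts k} ×ˢ (univ : Set ℝ))) ∪
        ⋃ k ∈ Iio (P.N + 1), cellMap P l ε k '' S k := by
      rintro ⟨x, y⟩ ⟨hφz, hmem⟩
      obtain ⟨hx01, hy⟩ := hmem
      by_cases hline : ∃ j ∈ Iio (P.N + 2), x = P.pts j
      · obtain ⟨j, hj, rfl⟩ := hline
        exact Or.inl (mem_biUnion hj ⟨rfl, mem_univ _⟩)
      · push_neg at hline
        right
        have hkN : P.idx x ≤ P.N := P.idx_le x
        set k := P.idx x with hk
        have h1 : P.pts k ≤ x := P.bracket_le (le_of_lt hx01.1)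
        have h2 : x < P.pts (k + 1) := P.lt_next hx01.2
        have h1' : P.pts k < x :=
          lt_of_le_of_ne h1 (fun h => hline k (mem_Iio.mpr (by omega)) h.symm)
        have hlk : 0 < l (P.pts k) := hlpos k hkN
        have hΓk : 0 < (P.pts (k + 1) - P.pts k) / l (P.pts k) := hΓpos k hkN
        refine mem_biUnion (x := k) (mem_Iio.mpr (by omega))
          ⟨((x - P.pts k) / ((P.pts (k + 1) - P.pts k) / l (P.pts k)), y / ε), ?_, ?_⟩
        · -- membership in S k
          have hw1pos : 0 < (x - P.pts k) / ((P.pts (k + 1) - P.pts k) / l (P.pts k)) :=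
            div_pos (sub_pos.mpr h1') hΓk
          have hw1lt : (x - P.pts k) / ((P.pts (k + 1) - P.pts k) / l (P.pts k)) <
              l (P.pts k) := by
            rw [div_lt_iff₀ hΓk]
            have : l (P.pts k) * ((P.pts (k + 1) - P.pts k) / l (P.pts k)) =
                P.pts (k + 1) - P.pts k := by field_simp
            rw [this]
            linarith
          have hG1y : y / ε < G1 := by
            rw [div_lt_iff₀ hε]
            have := (hGb x hx01 (x / ε)).2
            nlinarith [hy.2]
          have hmap : cellMap P l ε k
              ((x - P.pts k) / ((P.pts (k + 1) - P.pts k) / l (P.pts k)), y / ε) = (x, y) := by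
            simp only [cellMap]
            rw [Prod.ext_iff]
            constructor
            · show P.pts k + (P.pts (k + 1) - P.pts k) / l (P.pts k) *
                ((x - P.pts k) / ((P.pts (k + 1) - P.pts k) / l (P.pts k))) = x
              rw [mul_div_cancel₀ _ (ne_of_gt hΓk)]
              ring
            · show ε * (y / ε) = y
              field_simp
          simp only [hSdef, mem_setOf_eq]
          constructor
          · exact ⟨⟨hw1pos, lt_trans hw1lt (hlb _ ⟨P.pts_nonneg (by omega),
              P.pts_le_one (by omega)⟩).2⟩, div_pos hy.1 hε, hG1y⟩
          · have hcf : cellFun G l ε P φ k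
                ((x - P.pts k) / ((P.pts (k + 1) - P.pts k) / l (P.pts k)), y / ε) = φ (x, y) := by
              have hzmem : ((x, y) : ℝ × ℝ) ∈ thinDomain G ε := ⟨hx01, hy⟩
              rw [cellFun, if_pos hw1lt, hmap, indicator_of_mem hzmem]
            rw [hcf]
            exact hφz
        · -- cellMap eq
          simp only [cellMap]
          rw [Prod.ext_iff]
          constructor
          · show P.pts k + (P.pts (k + 1) - P.pts k) / l (P.pts k) *
              ((x - P.pts k) / ((P.pts (k + 1) - P.pts k) / l (P.pts k))) = x
            rw [mul_div_cancel₀ _ (ne_of_gt hΓk)]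
            ring
          · show ε * (y / ε) = y
            field_simp
    have hlines : volume (⋃ k ∈ Iio (P.N + 2), ({P.pts k} ×ˢ (univ : Set ℝ))) = 0 := by
      refine (measure_biUnion_null_iff (Set.to_countable _)).mpr fun k _ => ?_
      rw [MeasureTheory.Measure.volume_eq_prod, Measure.prod_prod, Real.volume_singleton, zero_mul]
    have himg : volume (⋃ k ∈ Iio (P.N + 1), cellMap P l ε k '' S k) = 0 := by
      refine (measure_biUnion_null_iff (Set.to_countable _)).mpr fun k hk => ?_
      exact affine_image_null (P.pts k) ((P.pts (k + 1) - P.pts k) / l (P.pts k)) ε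
        (ne_of_gt (hΓpos k (by simp at hk; omega))) hε' (hSnull k (by simp at hk; omega))
    have hφbad : volume ({z : ℝ × ℝ | D < (‖φ z‖₊ : ℝ≥0∞)} ∩ thinDomain G ε) = 0 :=
      measure_mono_null hsub3 (measure_union_null hlines himg)
    have hae : ∀ᵐ z ∂(volume.restrict (thinDomain G ε)), (‖φ z‖₊ : ℝ≥0∞) ≤ D := by
      rw [ae_iff, Measure.restrict_apply' hTD]
      refine measure_mono_null ?_ hφbad
      exact fun z hz => ⟨not_le.mp hz.1, hz.2⟩
    exact essSup_le_of_ae_le _ hae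
end
end

section
/- (Admissibility of the l(x)-partition near non-degenerate points, Section 4.) Let l : (0,1) → ℝ be continuously differentiable with l_0 ≤ l(t) < l_1 for all t ∈ (0,1), where 0 < l_0 < l_1. Let x ∈ (0,1) satisfy x·l'(x) ≠ l(x). Then there exist ε₁ > 0 and C > 0 such that for every ε ∈ (0, ε₁) there exist t ∈ (0,1) and a positive integer k with t/l(t) = kε and |x − t| ≤ Cε. -/
open MeasureTheory Set Filter Topology

noncomputable section

set_option maxHeartbeats 1600000 in
/-- Admissibility of the `l(x)`-partition near non-degenerate points (Section 4). -/
theorem lx_partition_admissible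
    (l0 l1 : ℝ) (hl0 : 0 < l0) (hl01 : l0 < l1)
    (l : ℝ → ℝ) (hlC1 : ContDiffOn ℝ 1 l (Ioo 0 1))
    (hlb : ∀ t ∈ Ioo (0 : ℝ) 1, l0 ≤ l t ∧ l t < l1)
    (x : ℝ) (hx : x ∈ Ioo (0 : ℝ) 1) (hnd : x * deriv l x ≠ l x) :
    ∃ ε₁ : ℝ, 0 < ε₁ ∧ ∃ C : ℝ, 0 < C ∧
      ∀ ε : ℝ, 0 < ε → ε < ε₁ →
        ∃ t ∈ Ioo (0 : ℝ) 1, ∃ k : ℕ, 0 < k ∧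
          t / l t = (k : ℝ) * ε ∧ |x - t| ≤ C * ε := by
  obtain ⟨hx0, hx1⟩ := hx
  set f : ℝ → ℝ := fun t => t / l t with hfdef
  have hlpos : ∀ t ∈ Ioo (0:ℝ) 1, 0 < l t := fun t ht => lt_of_lt_of_le hl0 (hlb t ht).1
  have hlne : ∀ t ∈ Ioo (0:ℝ) 1, l t ≠ 0 := fun t ht => (hlpos t ht).ne'
  set g : ℝ → ℝ := fun t => (l t - t * deriv l t) / (l t)^2 with hgdef
  have hld : DifferentiableOn ℝ l (Ioo 0 1) := hlC1.differentiableOn one_ne_zero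
  have hderiv : ∀ s ∈ Ioo (0:ℝ) 1, HasDerivAt f (g s) s := by
    intro s hs
    have h1 : DifferentiableAt ℝ l s := hld.differentiableAt (isOpen_Ioo.mem_nhds hs)
    have h2 : HasDerivAt l (deriv l s) s := h1.hasDerivAt
    have h3 := (hasDerivAt_id s).div h2 (hlne s hs)
    simpa [hgdef, one_mul, Pi.div_def] using h3
  have hgcont : ContinuousOn g (Ioo 0 1) := by
    have h1 : ContinuousOn (deriv l) (Ioo 0 1) :=
      hlC1.continuousOn_deriv_of_isOpen isOpen_Ioo le_rfl
    exact (hlC1.continuousOn.sub (continuousOn_id.mul h1)).div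
      (hlC1.continuousOn.pow 2) (fun t ht => pow_ne_zero 2 (hlne t ht))
  have hfc : ContinuousOn f (Ioo 0 1) := continuousOn_id.div hlC1.continuousOn hlne
  have hgx : g x ≠ 0 := by
    apply div_ne_zero
    · exact sub_ne_zero.2 (Ne.symm hnd)
    · exact pow_ne_zero 2 (hlne x ⟨hx0, hx1⟩)
  set m : ℝ := |g x| / 2 with hmdef
  have hm : 0 < m := by
    have := abs_pos.2 hgx
    simp only [hmdef]; linarith
  obtain ⟨δ₀, hδ₀, hδball⟩ := Metric.continuousAt_iff.1
    (hgcont.continuousAt (isOpen_Ioo.mem_nhds ⟨hx0, hx1⟩)) m hm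
  set δ : ℝ := min (δ₀/2) (min (x/2) ((1-x)/2)) with hδdef
  have hδ : 0 < δ := by
    apply lt_min (by linarith) (lt_min (by linarith) (by linarith))
  have hδδ₀ : δ < δ₀ := lt_of_le_of_lt (min_le_left _ _) (by linarith)
  have hδx : δ ≤ x/2 := le_trans (min_le_right _ _) (min_le_left _ _)
  have hδx1 : δ ≤ (1-x)/2 := le_trans (min_le_right _ _) (min_le_right _ _)
  have hsub : Icc (x-δ) (x+δ) ⊆ Ioo (0:ℝ) 1 := by
    intro s hs
    rw [mem_Icc] at hs
    obtain ⟨hs1, hs2⟩ := hs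
    constructor
    · linarith
    · linarith
  have hgclose : ∀ s ∈ Icc (x-δ) (x+δ), |g s - g x| < m := by
    intro s hs
    rw [mem_Icc] at hs
    have : dist s x < δ₀ := by
      rw [Real.dist_eq]
      have hthis : |s - x| ≤ δ := abs_le.2 ⟨by linarith [hs.1], by linarith [hs.2]⟩
      calc |s - x| ≤ δ := hthis
        _ < δ₀ := hδδ₀
    simpa [Real.dist_eq] using hδball this
  have hfx : 0 < f x := div_pos hx0 (hlpos x ⟨hx0, hx1⟩)
  refine ⟨min (m*δ) (f x), lt_min (mul_pos hm hδ) hfx, 1/m, by positivity, ?_⟩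
  intro ε hε hε₁
  obtain ⟨hεmδ, hεfx⟩ := lt_min_iff.1 hε₁
  set k : ℕ := ⌊f x / ε⌋₊ with hkdef
  have hk1 : 1 ≤ k := by
    apply Nat.le_floor
    rw [Nat.cast_one]
    exact (one_le_div hε).2 hεfx.le
  have hkle : (k:ℝ) * ε ≤ f x := by
    have h := Nat.floor_le (div_nonneg hfx.le hε.le)
    calc (k:ℝ) * ε ≤ (f x / ε) * ε := mul_le_mul_of_nonneg_right h hε.le
      _ = f x := div_mul_cancel₀ _ hε.ne'
  have hkgt : f x - ε < (k:ℝ) * ε := by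
    have h := Nat.lt_floor_add_one (f x / ε)
    have := (div_lt_iff₀ hε).1 h
    push_cast at this ⊢
    nlinarith
  have hconv : Convex ℝ (Icc (x-δ) (x+δ)) := convex_Icc _ _
  have hint : interior (Icc (x-δ) (x+δ)) = Ioo (x-δ) (x+δ) := interior_Icc
  have hfcI : ContinuousOn f (Icc (x-δ) (x+δ)) := hfc.mono hsub
  have hfdI : DifferentiableOn ℝ f (interior (Icc (x-δ) (x+δ))) := by
    rw [hint]
    intro s hs
    exact ((hderiv s (hsub (Ioo_subset_Icc_self hs))).differentiableAt).differentiableWithinAt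
  have hderiveq : ∀ s ∈ interior (Icc (x-δ) (x+δ)), deriv f s = g s := by
    rw [hint]
    intro s hs
    exact (hderiv s (hsub (Ioo_subset_Icc_self hs))).deriv
  have hxmem : x ∈ Icc (x-δ) (x+δ) := ⟨by linarith, by linarith⟩
  rcases hgx.lt_or_gt with hneg | hpos
  · -- g x < 0 : f decreasing
    have habs : m = -(g x) / 2 := by rw [hmdef, abs_of_neg hneg]
    have hupp : ∀ s ∈ interior (Icc (x-δ) (x+δ)), deriv f s ≤ -m := by
      intro s hs
      rw [hderiveq s hs]
      have h1 := hgclose s (interior_subset hs)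
      have h2 := (abs_lt.1 h1).2
      rw [habs] at *
      linarith
    have key := hconv.image_sub_le_mul_sub_of_deriv_le hfcI hfdI hupp
    have hend : f (x+δ) ≤ f x - m * δ := by
      have := key x hxmem (x+δ) ⟨by linarith, by linarith⟩ (by linarith)
      nlinarith
    have hksub : (k:ℝ) * ε ∈ Icc (f (x+δ)) (f x) :=
      ⟨by linarith, hkle⟩
    obtain ⟨t, htm, hft⟩ := intermediate_value_Icc' (by linarith : x ≤ x+δ)
      (hfcI.mono (Icc_subset_Icc (by linarith) le_rfl)) hksub
    have htI : t ∈ Icc (x-δ) (x+δ) := Icc_subset_Icc (by linarith) le_rfl htm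
    refine ⟨t, hsub htI, k, hk1, hft, ?_⟩
    have hbound := key x hxmem t htI htm.1
    rw [hft] at hbound
    have hxt : x ≤ t := htm.1
    rw [abs_of_nonpos (by linarith)]
    have : m * (t - x) ≤ ε := by nlinarith
    rw [div_mul_eq_mul_div, le_div_iff₀ hm]
    nlinarith
  · -- 0 < g x : f increasing
    have habs : m = g x / 2 := by rw [hmdef, abs_of_pos hpos]
    have hlow : ∀ s ∈ interior (Icc (x-δ) (x+δ)), m ≤ deriv f s := by
      intro s hs
      rw [hderiveq s hs]
      have h1 := hgclose s (interior_subset hs)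
      have h2 := (abs_lt.1 h1).1
      rw [habs] at *
      linarith
    have key := hconv.mul_sub_le_image_sub_of_le_deriv hfcI hfdI hlow
    have hend : f (x-δ) ≤ f x - m * δ := by
      have := key (x-δ) ⟨le_rfl, by linarith⟩ x hxmem (by linarith)
      nlinarith
    have hksub : (k:ℝ) * ε ∈ Icc (f (x-δ)) (f x) :=
      ⟨by linarith, hkle⟩
    obtain ⟨t, htm, hft⟩ := intermediate_value_Icc (by linarith : x-δ ≤ x)
      (hfcI.mono (Icc_subset_Icc le_rfl (by linarith))) hksub
    have htI : t ∈ Icc (x-δ) (x+δ) := Icc_subset_Icc le_rfl (by linarith) htm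
    refine ⟨t, hsub htI, k, hk1, hft, ?_⟩
    have hbound := key t htI x hxmem htm.2
    rw [hft] at hbound
    rw [abs_of_nonneg (by linarith [htm.2])]
    have : m * (x - t) ≤ ε := by nlinarith
    rw [div_mul_eq_mul_div, le_div_iff₀ hm]
    nlinarith
end
end
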